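/- arXiv:math/0603534 — 6 statements merged into one kernel-verified Lean document; each statement's English description precedes it below -/
import Mathlib

section
/- Let F(y) = log(1 + 1/y) - 1/y and define H(y) = -1/(4y²) for y ≥ 1 and H(y) = -1/(2y) + 1/4 for 0 < y ≤ 1. Then for all y > 0, -1/(2y²) < F(y) < H(y). -/
lemma log1p_deriv (x : ℝ) (hx : 0 < 1 + x) :
    HasDerivAt (fun t : ℝ => Real.log (1 + t)) (1/(1+x)) x := by
  have h := ((hasDerivAt_id x).const_add 1).log (ne_of_gt hx)
  simpa using h

lemma log1p_contOn : ContinuousOn (fun t : ℝ => Real.log (1 + t)) (Set.Ici 0) := by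
  apply Real.continuousOn_log.comp (by fun_prop)
  intro t ht
  simp only [Set.mem_compl_iff, Set.mem_singleton_iff]
  have : (0:ℝ) ≤ t := ht
  intro h; linarith

lemma lemA (x : ℝ) (hx : 0 < x) : x - x^2/2 < Real.log (1 + x) := by
  have key : StrictMonoOn (fun t : ℝ => Real.log (1+t) - t + t^2/2) (Set.Ici 0) := by
    apply strictMonoOn_of_deriv_pos (convex_Ici 0)
    · exact (log1p_contOn.sub continuousOn_id).add (by fun_prop)
    · intro t ht
      rw [interior_Ici, Set.mem_Ioi] at ht
      have h1 : (0:ℝ) < 1 + t := by linarith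
      have hd : HasDerivAt (fun t : ℝ => Real.log (1+t) - t + t^2/2)
          (1/(1+t) - 1 + t) t := by
        have := ((log1p_deriv t h1).sub (hasDerivAt_id t)).add
          (((hasDerivAt_id t).pow 2).div_const 2)
        refine this.congr_deriv ?_
        simp
      rw [hd.deriv]
      have heq : 1/(1+t) - 1 + t = t^2/(1+t) := by field_simp; ring
      rw [heq]; positivity
  have h := key (Set.self_mem_Ici) (Set.mem_Ici.mpr hx.le) hx
  simp only [Real.log_one, add_zero] at h
  norm_num at h
  linarith

lemma lemB (x : ℝ) (hx : 0 < x) (hx1 : x ≤ 1) : Real.log (1 + x) < x - x^2/4 := by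
  have key : StrictMonoOn (fun t : ℝ => t - t^2/4 - Real.log (1+t)) (Set.Icc 0 1) := by
    apply strictMonoOn_of_deriv_pos (convex_Icc 0 1)
    · exact ((continuousOn_id.sub (by fun_prop)).sub
        (log1p_contOn.mono (fun t ht => ht.1)))
    · intro t ht
      rw [interior_Icc, Set.mem_Ioo] at ht
      have h1 : (0:ℝ) < 1 + t := by linarith [ht.1]
      have hd : HasDerivAt (fun t : ℝ => t - t^2/4 - Real.log (1+t))
          (1 - t/2 - 1/(1+t)) t := by
        have := (((hasDerivAt_id t).sub (((hasDerivAt_id t).pow 2).div_const 4)).sub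
          (log1p_deriv t h1))
        refine this.congr_deriv ?_
        simp; ring
      rw [hd.deriv]
      have heq : 1 - t/2 - 1/(1+t) = t*(1-t)/(2*(1+t)) := by field_simp; ring
      rw [heq]
      have h2 : 0 < 1 - t := by linarith [ht.2]
      have h3 := ht.1
      positivity
  have h := key (Set.left_mem_Icc.mpr one_pos.le) (Set.mem_Icc.mpr ⟨hx.le, hx1⟩) hx
  simp only [Real.log_one, add_zero] at h
  norm_num at h
  linarith

lemma lemC (x : ℝ) (hx : 1 ≤ x) : Real.log (1 + x) < x/2 + 1/4 := by
  have base : Real.log 2 < 3/4 := by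
    have := Real.log_two_lt_d9; linarith
  rcases eq_or_lt_of_le hx with h | h
  · rw [← h]; norm_num; linarith
  have key : StrictMonoOn (fun t : ℝ => t/2 + 1/4 - Real.log (1+t)) (Set.Ici 1) := by
    apply strictMonoOn_of_deriv_pos (convex_Ici 1)
    · exact (by fun_prop : ContinuousOn (fun t : ℝ => t/2 + 1/4) _).sub
        (log1p_contOn.mono (fun t ht => Set.mem_Ici.mpr (le_trans one_pos.le ht)))
    · intro t ht
      rw [interior_Ici, Set.mem_Ioi] at ht
      have h1 : (0:ℝ) < 1 + t := by linarith
      have hd : HasDerivAt (fun t : ℝ => t/2 + 1/4 - Real.log (1+t))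
          (1/2 - 1/(1+t)) t := by
        have := (((hasDerivAt_id t).div_const 2).add_const (1/4:ℝ)).sub
          (log1p_deriv t h1)
        refine this.congr_deriv ?_
        ring
      rw [hd.deriv]
      have heq : 1/2 - 1/(1+t) = (t-1)/(2*(1+t)) := by field_simp; ring
      rw [heq]
      have : 0 < t - 1 := by linarith
      positivity
  have hmem1 : (1:ℝ) ∈ Set.Ici (1:ℝ) := Set.self_mem_Ici
  have hk := key hmem1 (Set.mem_Ici.mpr hx) h
  simp only at hk
  have h2 : (1:ℝ) + 1 = 2 := by norm_num
  rw [h2] at hk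
  linarith

theorem F_bounds
    (F H : ℝ → ℝ)
    (hF : ∀ y : ℝ, 0 < y → F y = Real.log (1 + 1/y) - 1/y)
    (hH1 : ∀ y : ℝ, 1 ≤ y → H y = -1/(4*y^2))
    (hH2 : ∀ y : ℝ, 0 < y → y ≤ 1 → H y = -1/(2*y) + 1/4) :
    ∀ y : ℝ, 0 < y → -1/(2*y^2) < F y ∧ F y < H y := by
  intro y hy
  set x := 1/y with hxdef
  have hx : 0 < x := by positivity
  have hx2 : x^2 = 1/y^2 := by rw [hxdef]; field_simp
  rw [hF y hy]
  constructor
  · have := lemA x hx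
    have h1 : -1/(2*y^2) = -(x^2)/2 := by rw [hx2]; ring
    rw [h1]; linarith
  · rcases le_total 1 y with h | h
    · rw [hH1 y h]
      have hxle : x ≤ 1 := by rw [hxdef]; exact (div_le_one hy).mpr h
      have := lemB x hx hxle
      have h1 : -1/(4*y^2) = x - x^2/4 - x := by rw [hx2]; ring
      rw [h1]; linarith
    · rw [hH2 y hy h]
      have hxge : 1 ≤ x := (one_le_div hy).mpr h
      have := lemC x hxge
      have h1 : -1/(2*y) + 1/4 = x/2 + 1/4 - x := by rw [hxdef]; ring
      rw [h1]; linarith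
end

section
/- Let n ≥ 1, δ = -1/(2n+1), c = (1 - δ²)/4, v₁ = -2/(1+δ), v₂ = -2/(1-δ), and define H(x,y) = y·(1 - x y/v₁)^n / (1 - x y/v₂)^{n+1}. Then H is a first integral of the Abel equation y' = c x y³ + y²: at every point (x,y) with 1 - x y/v₂ ≠ 0, we have ∂H/∂x (x,y) + (c x y³ + y²)·∂H/∂y (x,y) = 0. -/
set_option maxHeartbeats 1000000 in
theorem first_integral_abel (n : ℕ) (hn : 1 ≤ n) (δ c v₁ v₂ : ℂ)
    (hδ : δ = -1/(2*n+1)) (hc : c = (1 - δ^2)/4)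
    (hv₁ : v₁ = -2/(1+δ)) (hv₂ : v₂ = -2/(1-δ))
    (H : ℂ → ℂ → ℂ)
    (hH : ∀ x y : ℂ, H x y = y*(1 - x*y/v₁)^n / (1 - x*y/v₂)^(n+1)) :
    ∀ x y : ℂ, 1 - x*y/v₂ ≠ 0 →
      deriv (fun x' => H x' y) x + (c*x*y^3 + y^2) * deriv (fun y' => H x y') y = 0 := by
  obtain ⟨m, rfl⟩ : ∃ m, n = m + 1 := ⟨n - 1, (Nat.succ_pred_eq_of_pos hn).symm⟩
  intro x y hb
  have hm1 : ((m : ℂ) + 1) ≠ 0 := by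
    have := Nat.cast_ne_zero (R := ℂ) (n := m + 1) |>.2 (by omega); push_cast at this; exact this
  have hm2 : ((m : ℂ) + 2) ≠ 0 := by
    have := Nat.cast_ne_zero (R := ℂ) (n := m + 2) |>.2 (by omega); push_cast at this; exact this
  have h3' : (2*(m:ℂ) + 3) ≠ 0 := by
    have := Nat.cast_ne_zero (R := ℂ) (n := 2*m + 3) |>.2 (by omega); push_cast at this; exact this
  have hδ' : δ = -1 / (2*(m:ℂ) + 3) := by rw [hδ]; push_cast; ring_nf
  have h22 : (2*(m:ℂ)+2) ≠ 0 := by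
    have := mul_ne_zero (two_ne_zero (α := ℂ)) hm1; convert this using 1; ring
  have h24 : (2*(m:ℂ)+4) ≠ 0 := by
    have := mul_ne_zero (two_ne_zero (α := ℂ)) hm2; convert this using 1; ring
  have h1δ : 1 + δ = (2*(m:ℂ)+2)/(2*(m:ℂ)+3) := by
    rw [hδ']; field_simp; ring
  have h2δ : 1 - δ = (2*(m:ℂ)+4)/(2*(m:ℂ)+3) := by
    rw [hδ']; field_simp; ring
  have hv₁' : v₁ = -(2*(m:ℂ)+3)/((m:ℂ)+1) := by
    rw [hv₁, h1δ, div_div_eq_mul_div]; rw [div_eq_div_iff h22 hm1]; ring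
  have hv₂' : v₂ = -(2*(m:ℂ)+3)/((m:ℂ)+2) := by
    rw [hv₂, h2δ, div_div_eq_mul_div]; rw [div_eq_div_iff h24 hm2]; ring
  have hc' : c = ((m:ℂ)+1)*((m:ℂ)+2)/(2*(m:ℂ)+3)^2 := by
    rw [hc, hδ']; field_simp; ring
  have hV₁ : v₁ ≠ 0 := by rw [hv₁']; exact div_ne_zero (neg_ne_zero.2 h3') hm1
  have hV₂ : v₂ ≠ 0 := by rw [hv₂']; exact div_ne_zero (neg_ne_zero.2 h3') hm2
  set a : ℂ := 1 - x*y/v₁ with ha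
  set b : ℂ := 1 - x*y/v₂ with hbdef
  -- x-derivative
  have Dx : HasDerivAt (fun x' => H x' y)
      ((y * ((↑(m+1) : ℂ) * a ^ m * (-(y/v₁))) * b ^ (m+2)
        - y * a ^ (m+1) * ((↑(m+2) : ℂ) * b ^ (m+1) * (-(y/v₂)))) / (b ^ (m+2)) ^ 2) x := by
    have hA : HasDerivAt (fun x' : ℂ => 1 - x'*y/v₁) (-(y/v₁)) x := by
      have : HasDerivAt (fun x' : ℂ => 1 - x' * (y/v₁)) (-(y/v₁)) x := by
        simpa using ((hasDerivAt_id x).mul_const (y/v₁)).const_sub 1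
      simpa [mul_div_assoc] using this
    have hB : HasDerivAt (fun x' : ℂ => 1 - x'*y/v₂) (-(y/v₂)) x := by
      have : HasDerivAt (fun x' : ℂ => 1 - x' * (y/v₂)) (-(y/v₂)) x := by
        simpa using ((hasDerivAt_id x).mul_const (y/v₂)).const_sub 1
      simpa [mul_div_assoc] using this
    have hnum : HasDerivAt (fun x' : ℂ => y * (1 - x'*y/v₁) ^ (m+1))
        (y * ((↑(m+1) : ℂ) * a ^ m * (-(y/v₁)))) x := by
      simpa using (hA.pow (m+1)).const_mul y
    have hden : HasDerivAt (fun x' : ℂ => (1 - x'*y/v₂) ^ (m+2))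
        ((↑(m+2) : ℂ) * b ^ (m+1) * (-(y/v₂))) x := by
      simpa using hB.fun_pow (m+2)
    have h := hnum.div hden (pow_ne_zero _ hb)
    simp only [hH, show m + 1 + 1 = m + 2 from rfl]
    exact h
  -- y-derivative
  have Dy : HasDerivAt (fun y' => H x y')
      (((1 * a ^ (m+1) + y * ((↑(m+1) : ℂ) * a ^ m * (-(x/v₁)))) * b ^ (m+2)
        - y * a ^ (m+1) * ((↑(m+2) : ℂ) * b ^ (m+1) * (-(x/v₂)))) / (b ^ (m+2)) ^ 2) y := by
    have hA : HasDerivAt (fun y' : ℂ => 1 - x*y'/v₁) (-(x/v₁)) y := by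
      have : HasDerivAt (fun y' : ℂ => 1 - y' * (x/v₁)) (-(x/v₁)) y := by
        simpa using ((hasDerivAt_id y).mul_const (x/v₁)).const_sub 1
      simpa [mul_div_assoc, mul_comm x] using this
    have hB : HasDerivAt (fun y' : ℂ => 1 - x*y'/v₂) (-(x/v₂)) y := by
      have : HasDerivAt (fun y' : ℂ => 1 - y' * (x/v₂)) (-(x/v₂)) y := by
        simpa using ((hasDerivAt_id y).mul_const (x/v₂)).const_sub 1
      simpa [mul_div_assoc, mul_comm x] using this
    have hnum : HasDerivAt (fun y' : ℂ => y' * (1 - x*y'/v₁) ^ (m+1))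
        (1 * a ^ (m+1) + y * ((↑(m+1) : ℂ) * a ^ m * (-(x/v₁)))) y := by
      simpa using (hasDerivAt_id' y).fun_mul (hA.fun_pow (m+1))
    have hden : HasDerivAt (fun y' : ℂ => (1 - x*y'/v₂) ^ (m+2))
        ((↑(m+2) : ℂ) * b ^ (m+1) * (-(x/v₂))) y := by
      simpa using hB.fun_pow (m+2)
    have h := hnum.div hden (pow_ne_zero _ hb)
    simp only [hH, show m + 1 + 1 = m + 2 from rfl]
    exact h
  rw [Dx.deriv, Dy.deriv]
  have key : (y * (((m:ℂ)+1) * (-(y/v₁))) * b - y * a * (((m:ℂ)+2) * (-(y/v₂))))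
      + (c*x*y^3 + y^2) * ((1 * a + y * (((m:ℂ)+1) * (-(x/v₁)))) * b
        - y * a * (((m:ℂ)+2) * (-(x/v₂)))) = 0 := by
    have e1 : -(y/v₁) = ((m:ℂ)+1)*y/(2*(m:ℂ)+3) := by
      rw [hv₁']; rw [div_div_eq_mul_div, div_neg, neg_neg]; ring
    have e2 : -(x/v₁) = ((m:ℂ)+1)*x/(2*(m:ℂ)+3) := by
      rw [hv₁']; rw [div_div_eq_mul_div, div_neg, neg_neg]; ring
    have e3 : -(y/v₂) = ((m:ℂ)+2)*y/(2*(m:ℂ)+3) := by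
      rw [hv₂']; rw [div_div_eq_mul_div, div_neg, neg_neg]; ring
    have e4 : -(x/v₂) = ((m:ℂ)+2)*x/(2*(m:ℂ)+3) := by
      rw [hv₂']; rw [div_div_eq_mul_div, div_neg, neg_neg]; ring
    have ea : a = 1 + ((m:ℂ)+1)*(x*y)/(2*(m:ℂ)+3) := by
      rw [ha, hv₁', div_div_eq_mul_div, div_neg, sub_neg_eq_add]; ring
    have eb : b = 1 + ((m:ℂ)+2)*(x*y)/(2*(m:ℂ)+3) := by
      rw [hbdef, hv₂', div_div_eq_mul_div, div_neg, sub_neg_eq_add]; ring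
    rw [hc', e1, e2, e3, e4, ea, eb]
    field_simp [show (m:ℂ)*2+3 ≠ 0 by rw [mul_comm]; exact h3']
    ring
  have hD : ((b ^ (m+2) : ℂ)) ^ 2 ≠ 0 := pow_ne_zero _ (pow_ne_zero _ hb)
  rw [← mul_div_assoc, ← add_div, div_eq_zero_iff]
  left
  push_cast
  linear_combination (a^m * b^(m+1)) * key
end

section
/- With the notation of the first integral H(x,y) = y·(1 - x y/v₁)^n/(1 - x y/v₂)^{n+1} (n ≥ 2, v₁ = -(2n+1)/n, v₂ = -(2n+1)/(n+1)): if (x,y) is a point with 1 - x y/v₂ ≠ 0 and ∂H/∂y (x,y) = 0, then x y = v₁, i.e. the point lies on the hyperbola {(x,y) : x y = v₁}. In particular all critical points of H lie on this hyperbola. -/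
theorem critical_points_on_hyperbola (n : ℕ) (hn : 2 ≤ n) (v₁ v₂ : ℂ)
    (hv₁ : v₁ = -((2*n+1) : ℂ)/n) (hv₂ : v₂ = -((2*n+1) : ℂ)/(n+1))
    (H : ℂ → ℂ → ℂ)
    (hH : ∀ x y : ℂ, H x y = y*(1 - x*y/v₁)^n / (1 - x*y/v₂)^(n+1)) :
    ∀ x y : ℂ, 1 - x*y/v₂ ≠ 0 → deriv (fun y' => H x y') y = 0 → x*y = v₁ := by
  intro x y hBne hD
  have hn0 : (n : ℂ) ≠ 0 := by
    exact Nat.cast_ne_zero.mpr (by omega)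
  have hn1 : ((n : ℂ) + 1) ≠ 0 := Nat.cast_add_one_ne_zero n
  have h2n1 : ((2*n+1 : ℕ) : ℂ) ≠ 0 := Nat.cast_ne_zero.mpr (by omega)
  have h2n1' : (2*(n:ℂ)+1) ≠ 0 := by push_cast at h2n1; convert h2n1 using 1
  have hv1ne : v₁ ≠ 0 := by
    rw [hv₁]
    exact div_ne_zero (neg_ne_zero.mpr h2n1') hn0
  have hv2ne : v₂ ≠ 0 := by
    rw [hv₂]
    exact div_ne_zero (neg_ne_zero.mpr h2n1') hn1
  have hfun : (fun y' => H x y') = fun y' => y'*(1 - x*y'/v₁)^n / (1 - x*y'/v₂)^(n+1) :=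
    funext fun y' => hH x y'
  rw [hfun] at hD
  -- derivative of inner affine maps
  have hA : HasDerivAt (fun y' : ℂ => 1 - x*y'/v₁) (-(x/v₁)) y := by
    have h1 : HasDerivAt (fun y' : ℂ => x*y'/v₁) (x/v₁) y := by
      simpa using ((hasDerivAt_id y).const_mul x).div_const v₁
    have := (hasDerivAt_const y (1:ℂ)).sub h1
    simp only [zero_sub] at this
    exact this
  have hB : HasDerivAt (fun y' : ℂ => 1 - x*y'/v₂) (-(x/v₂)) y := by
    have h1 : HasDerivAt (fun y' : ℂ => x*y'/v₂) (x/v₂) y := by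
      simpa using ((hasDerivAt_id y).const_mul x).div_const v₂
    have := (hasDerivAt_const y (1:ℂ)).sub h1
    simp only [zero_sub] at this
    exact this
  have hu : HasDerivAt (fun y' : ℂ => y'*(1 - x*y'/v₁)^n)
      (1 * (1 - x*y/v₁)^n + y * ((n:ℂ) * (1 - x*y/v₁)^(n-1) * (-(x/v₁)))) y :=
    (hasDerivAt_id y).mul (hA.pow n)
  have hw : HasDerivAt (fun y' : ℂ => (1 - x*y'/v₂)^(n+1))
      (((n:ℂ)+1) * (1 - x*y/v₂)^n * (-(x/v₂))) y := by
    have := hB.pow (n+1)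
    simp only [Nat.cast_add, Nat.cast_one, add_tsub_cancel_right] at this
    exact this
  have hwne : (1 - x*y/v₂)^(n+1) ≠ 0 := pow_ne_zero _ hBne
  have hf : HasDerivAt (fun y' : ℂ => y'*(1 - x*y'/v₁)^n / (1 - x*y'/v₂)^(n+1)) _ y := hu.div hw hwne
  rw [hf.deriv] at hD
  have hnum : (1 * (1 - x*y/v₁)^n + y * ((n:ℂ) * (1 - x*y/v₁)^(n-1) * (-(x/v₁)))) *
      (1 - x*y/v₂)^(n+1) - y*(1 - x*y/v₁)^n * (((n:ℂ)+1) * (1 - x*y/v₂)^n * (-(x/v₂))) = 0 := by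
    have := div_eq_zero_iff.mp hD
    rcases this with h | h
    · exact h
    · exact absurd h (pow_ne_zero 2 hwne)
  obtain ⟨m, rfl⟩ : ∃ m, n = m + 2 := ⟨n - 2, by omega⟩
  -- factor the numerator
  have hfact : (1 * (1 - x*y/v₁)^(m+2) + y * (((m+2:ℕ):ℂ) * (1 - x*y/v₁)^(m+2-1) * (-(x/v₁)))) *
      (1 - x*y/v₂)^(m+2+1) - y*(1 - x*y/v₁)^(m+2) * ((((m+2:ℕ):ℂ)+1) * (1 - x*y/v₂)^(m+2) * (-(x/v₂)))
      = (1 - x*y/v₁)^(m+1) * (1 - x*y/v₂)^(m+2) *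
        ((1 - x*y/v₁)*(1 - x*y/v₂) - ((m+2:ℕ):ℂ)*(x/v₁)*y*(1 - x*y/v₂)
          + (((m+2:ℕ):ℂ)+1)*(x/v₂)*y*(1 - x*y/v₁)) := by
    rw [show m + 2 - 1 = m + 1 from rfl]
    generalize (1 - x*y/v₁) = A
    generalize (1 - x*y/v₂) = B
    ring
  have hbr : (1 - x*y/v₁)*(1 - x*y/v₂) - ((m+2:ℕ):ℂ)*(x/v₁)*y*(1 - x*y/v₂)
      + (((m+2:ℕ):ℂ)+1)*(x/v₂)*y*(1 - x*y/v₁) = 1 := by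
    subst hv₁ hv₂
    push_cast at *
    field_simp
    ring
  rw [hfact, hbr, mul_one] at hnum
  have hAz : (1 - x*y/v₁)^(m+1) = 0 := by
    rcases mul_eq_zero.mp hnum with h | h
    · exact h
    · exact absurd h (pow_ne_zero _ hBne)
  have hA0 : 1 - x*y/v₁ = 0 := pow_eq_zero_iff (by omega) |>.mp hAz
  have : x*y/v₁ = 1 := by linear_combination -hA0
  calc x*y = (x*y/v₁) * v₁ := by field_simp
    _ = v₁ := by rw [this, one_mul]
end

section
/- Define G(x,y) = (y/(x y + 2)) · exp(2/(x y + 2)) for x y + 2 ≠ 0. Then G is a first integral of the Abel equation y' = (1/4) x y³ + y²: at every point (x,y) with x y + 2 ≠ 0, ∂G/∂x (x,y) + ((1/4) x y³ + y²)·∂G/∂y (x,y) = 0. -/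
set_option maxHeartbeats 1000000 in
theorem first_integral_discriminant_case (G : ℂ → ℂ → ℂ)
    (hG : ∀ x y : ℂ, x*y + 2 ≠ 0 →
      G x y = (y/(x*y + 2)) * Complex.exp (2/(x*y + 2))) :
    ∀ x y : ℂ, x*y + 2 ≠ 0 →
      deriv (fun x' => G x' y) x + ((1/4)*x*y^3 + y^2) * deriv (fun y' => G x y') y = 0 := by
  intro x y hxy
  have hu : HasDerivAt (fun x' : ℂ => x'*y + 2) y x := by
    simpa using ((hasDerivAt_id x).mul_const y).add_const 2
  have h1 : HasDerivAt (fun x' : ℂ => y/(x'*y+2)) ((0*(x*y+2) - y*y)/(x*y+2)^2) x :=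
    (hasDerivAt_const x y).div hu hxy
  have h2 : HasDerivAt (fun x' : ℂ => (2:ℂ)/(x'*y+2)) ((0*(x*y+2) - 2*y)/(x*y+2)^2) x :=
    (hasDerivAt_const x 2).div hu hxy
  have h3 : HasDerivAt (fun x' : ℂ => Complex.exp (2/(x'*y+2)))
      (Complex.exp (2/(x*y+2)) * ((0*(x*y+2) - 2*y)/(x*y+2)^2)) x := h2.cexp
  have h4 : HasDerivAt (fun x' : ℂ => (y/(x'*y+2)) * Complex.exp (2/(x'*y+2))) _ x := h1.mul h3
  have hv : HasDerivAt (fun y' : ℂ => x*y' + 2) x y := by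
    simpa using ((hasDerivAt_id y).const_mul x).add_const 2
  have k1 : HasDerivAt (fun y' : ℂ => y'/(x*y'+2)) ((1*(x*y+2) - y*x)/(x*y+2)^2) y :=
    (hasDerivAt_id y).div hv hxy
  have k2 : HasDerivAt (fun y' : ℂ => (2:ℂ)/(x*y'+2)) ((0*(x*y+2) - 2*x)/(x*y+2)^2) y :=
    (hasDerivAt_const y 2).div hv hxy
  have k3 : HasDerivAt (fun y' : ℂ => Complex.exp (2/(x*y'+2)))
      (Complex.exp (2/(x*y+2)) * ((0*(x*y+2) - 2*x)/(x*y+2)^2)) y := k2.cexp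
  have k4 : HasDerivAt (fun y' : ℂ => (y'/(x*y'+2)) * Complex.exp (2/(x*y'+2))) _ y := k1.mul k3
  have hx_ev : (fun x' => G x' y) =ᶠ[nhds x]
      fun x' => (y/(x'*y+2)) * Complex.exp (2/(x'*y+2)) := by
    have hopen : IsOpen {x' : ℂ | x'*y + 2 ≠ 0} :=
      IsOpen.preimage (by continuity) isOpen_ne
    filter_upwards [hopen.mem_nhds hxy] with x' hx'
    exact hG x' y hx'
  have hy_ev : (fun y' => G x y') =ᶠ[nhds y]
      fun y' => (y'/(x*y'+2)) * Complex.exp (2/(x*y'+2)) := by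
    have hopen : IsOpen {y' : ℂ | x*y' + 2 ≠ 0} :=
      IsOpen.preimage (by continuity) isOpen_ne
    filter_upwards [hopen.mem_nhds hxy] with y' hy'
    exact hG x y' hy'
  rw [hx_ev.deriv_eq, hy_ev.deriv_eq, h4.deriv, k4.deriv]
  set E := Complex.exp (2/(x*y+2)) with hE
  have hC : ((0*(x*y+2) - y*y)/(x*y+2)^2
      + y/(x*y+2) * ((0*(x*y+2) - 2*y)/(x*y+2)^2)
      + ((1/4)*x*y^3 + y^2) * ((1*(x*y+2) - y*x)/(x*y+2)^2
        + y/(x*y+2) * ((0*(x*y+2) - 2*x)/(x*y+2)^2))) = 0 := by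
    field_simp [hxy]
    ring
  have factored : (0*(x*y+2) - y*y)/(x*y+2)^2 * E
      + y/(x*y+2) * (E * ((0*(x*y+2) - 2*y)/(x*y+2)^2))
      + ((1/4)*x*y^3 + y^2) * ((1*(x*y+2) - y*x)/(x*y+2)^2 * E
        + y/(x*y+2) * (E * ((0*(x*y+2) - 2*x)/(x*y+2)^2)))
      = ((0*(x*y+2) - y*y)/(x*y+2)^2
      + y/(x*y+2) * ((0*(x*y+2) - 2*y)/(x*y+2)^2)
      + ((1/4)*x*y^3 + y^2) * ((1*(x*y+2) - y*x)/(x*y+2)^2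
        + y/(x*y+2) * ((0*(x*y+2) - 2*x)/(x*y+2)^2))) * E := by ring
  rw [factored, hC, zero_mul]
end

section
/- For every natural number n, the function F(y) = 1 + log(-sin(y)/y) + y/tan(y), defined for y ∈ ((2n+1)π, (2n+2)π) (where sin y < 0 so the logarithm is defined), tends to +∞ as y → ((2n+1)π)⁺ and to -∞ as y → ((2n+2)π)⁻. Consequently, F has at least one zero in the interval ((2n+1)π, (2n+2)π). -/
open Real Filter Topology

/-- `log t + c / t → ∞` as `t → 0⁺`, for any `c > 0`. -/
lemma aux_log_add_div_tendsto {c : ℝ} (hc : 0 < c) :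
    Tendsto (fun t : ℝ => Real.log t + c / t) (𝓝[>] (0:ℝ)) atTop := by
  have key : Tendsto (fun z : ℝ => c * z - Real.log z) atTop atTop := by
    have hlo := Real.isLittleO_log_id_atTop.def (half_pos hc)
    apply tendsto_atTop_mono' atTop (f₁ := fun z : ℝ => c / 2 * z)
    · filter_upwards [hlo, eventually_ge_atTop (0:ℝ)] with z hz hz0
      have : Real.log z ≤ c / 2 * z := by
        calc Real.log z ≤ |Real.log z| := le_abs_self _
        _ ≤ c / 2 * |z| := by simpa [Real.norm_eq_abs] using hz
        _ = c / 2 * z := by rw [abs_of_nonneg hz0]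
      nlinarith
    · exact (tendsto_id.const_mul_atTop (half_pos hc))
  have hcomp := key.comp tendsto_inv_nhdsGT_zero
  refine hcomp.congr' ?_
  filter_upwards [self_mem_nhdsWithin] with t (ht : (0:ℝ) < t)
  simp only [Function.comp_apply, Real.log_inv]
  field_simp
  ring

lemma aux_sin_neg (n : ℕ) {y : ℝ}
    (hy : y ∈ Set.Ioo ((2*(n:ℝ)+1)*π) ((2*(n:ℝ)+2)*π)) : Real.sin y < 0 := by
  obtain ⟨h1, h2⟩ := hy
  have hpi := Real.pi_pos
  have ht1 : 0 < y - (2*(n:ℝ)+1)*π := by linarith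
  have ht2 : y - (2*(n:ℝ)+1)*π < π := by nlinarith
  have : Real.sin y = Real.sin ((y - (2*(n:ℝ)+1)*π + π) + n * (2*π)) := by
    ring_nf
  rw [this, Real.sin_add_nat_mul_two_pi, Real.sin_add_pi]
  have := Real.sin_pos_of_pos_of_lt_pi ht1 ht2
  linarith

theorem F_zero_in_interval (n : ℕ) (F : ℝ → ℝ)
    (hF : ∀ y ∈ Set.Ioo ((2*n+1)*π) ((2*n+2)*π),
      F y = 1 + Real.log (-Real.sin y / y) + y * Real.cos y / Real.sin y) :
    Tendsto F (nhdsWithin ((2*n+1)*π) (Set.Ioo ((2*n+1)*π) ((2*n+2)*π))) atTop ∧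
    Tendsto F (nhdsWithin ((2*n+2)*π) (Set.Ioo ((2*n+1)*π) ((2*n+2)*π))) atBot ∧
    ∃ y ∈ Set.Ioo ((2*n+1)*π) ((2*n+2)*π), F y = 0 := by
  have hpi := Real.pi_pos
  set a : ℝ := (2*n+1)*π with ha_def
  set b : ℝ := (2*n+2)*π with hb_def
  have hab : a < b := by
    have : (2*(n:ℝ)+1) < 2*(n:ℝ)+2 := by linarith
    exact mul_lt_mul_of_pos_right this hpi
  have ha_pos : 0 < a := by positivity
  have ha_ge_pi : π ≤ a := by nlinarith [Nat.cast_nonneg (α := ℝ) n]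
  have hb_pos : 0 < b := lt_trans ha_pos hab
  -- sin values at endpoints
  have hsin_a : Real.sin a = 0 := by
    have : a = ((2*n+1 : ℕ) : ℝ) * π := by push_cast [ha_def]; ring
    rw [this, Real.sin_nat_mul_pi]
  have hcos_a : Real.cos a = -1 := by
    have : a = π + n * (2*π) := by rw [ha_def]; ring
    rw [this, Real.cos_add_nat_mul_two_pi, Real.cos_pi]
  have hsin_b : Real.sin b = 0 := by
    have : b = 0 + ((n+1 : ℕ) : ℝ) * (2*π) := by push_cast [hb_def]; ring
    rw [this, Real.sin_add_nat_mul_two_pi, Real.sin_zero]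
  have hcos_b : Real.cos b = 1 := by
    have : b = ((n+1 : ℕ) : ℝ) * (2*π) := by push_cast [hb_def]; ring
    rw [this, Real.cos_nat_mul_two_pi]
  have hsin_neg : ∀ y ∈ Set.Ioo a b, Real.sin y < 0 := fun y hy => aux_sin_neg n hy
  have hy_pos : ∀ y ∈ Set.Ioo a b, 0 < y := fun y hy => lt_trans ha_pos hy.1
  -- Part 1: tendsto atTop at a
  have part1 : Tendsto F (𝓝[Set.Ioo a b] a) atTop := by
    -- lower bound function
    have hns : Tendsto (fun y => -Real.sin y) (𝓝[Set.Ioo a b] a) (𝓝[>] (0:ℝ)) := by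
      rw [tendsto_nhdsWithin_iff]
      constructor
      · have := (Real.continuous_sin.neg.tendsto a).mono_left
          (nhdsWithin_le_nhds (s := Set.Ioo a b))
        exact (by simpa [hsin_a] using this : Tendsto (-Real.sin) _ (𝓝 0))
      · filter_upwards [self_mem_nhdsWithin] with y hy
        simpa using hsin_neg y hy
    have hg : Tendsto (fun y => Real.log (-Real.sin y) + 1 / (-Real.sin y)
        + (1 - Real.log b)) (𝓝[Set.Ioo a b] a) atTop := by
      apply tendsto_atTop_add_const_right
      exact (aux_log_add_div_tendsto one_pos).comp hns
    apply tendsto_atTop_mono' _ _ hg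
    -- eventually g ≤ F
    have hyc : Tendsto (fun y => y * (-Real.cos y)) (𝓝[Set.Ioo a b] a) (𝓝 (a * 1)) := by
      have : Tendsto (fun y : ℝ => y * (-Real.cos y)) (𝓝 a) (𝓝 (a * (-Real.cos a))) :=
        (continuous_id.mul Real.continuous_cos.neg).tendsto a
      rw [hcos_a] at this
      simpa using this.mono_left nhdsWithin_le_nhds
    have hev : ∀ᶠ y in 𝓝[Set.Ioo a b] a, 1 ≤ y * (-Real.cos y) := by
      apply hyc.eventually_const_le
      nlinarith [Real.pi_gt_three]
    filter_upwards [self_mem_nhdsWithin, hev] with y hy h1y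
    have hs := hsin_neg y hy
    have hyp := hy_pos y hy
    rw [hF y hy]
    have hlog : Real.log (-Real.sin y / y) = Real.log (-Real.sin y) - Real.log y :=
      Real.log_div (by linarith) (ne_of_gt hyp)
    have hdiv : y * Real.cos y / Real.sin y = y * (-Real.cos y) / (-Real.sin y) := by
      rw [div_eq_div_iff (ne_of_lt hs) (by linarith)]; ring
    rw [hlog, hdiv]
    have h1 : Real.log y ≤ Real.log b := Real.log_le_log hyp (le_of_lt hy.2)
    have h2 : 1 / (-Real.sin y) ≤ y * (-Real.cos y) / (-Real.sin y) :=
      (div_le_div_iff_of_pos_right (by linarith)).mpr h1y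
    linarith
  -- Part 2: tendsto atBot at b
  have part2 : Tendsto F (𝓝[Set.Ioo a b] b) atBot := by
    have heq : ∀ᶠ y in 𝓝[Set.Ioo a b] b,
        (fun y => 1 + Real.log (-Real.sin y / y) + y * Real.cos y / Real.sin y) y = F y := by
      filter_upwards [self_mem_nhdsWithin] with y hy using (hF y hy).symm
    rw [← tendsto_congr' heq]
    have hnsb : Tendsto (fun y => -Real.sin y) (𝓝[Set.Ioo a b] b) (𝓝[>] (0:ℝ)) := by
      rw [tendsto_nhdsWithin_iff]
      constructor
      · have := (Real.continuous_sin.neg.tendsto b).mono_left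
          (nhdsWithin_le_nhds (s := Set.Ioo a b))
        exact (by simpa [hsin_b] using this : Tendsto (-Real.sin) _ (𝓝 0))
      · filter_upwards [self_mem_nhdsWithin] with y hy
        simpa using hsin_neg y hy
    have h1 : Tendsto (fun y => Real.log (-Real.sin y / y)) (𝓝[Set.Ioo a b] b) atBot := by
      apply Real.tendsto_log_nhdsGT_zero.comp
      rw [tendsto_nhdsWithin_iff]
      constructor
      · have hA : Tendsto (fun y => -Real.sin y) (𝓝[Set.Ioo a b] b) (𝓝 0) :=
          hnsb.mono_right nhdsWithin_le_nhds
        have hB : Tendsto (fun y : ℝ => y) (𝓝[Set.Ioo a b] b) (𝓝 b) :=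
          tendsto_id.mono_left nhdsWithin_le_nhds
        have := hA.div hB (ne_of_gt hb_pos)
        rw [zero_div] at this
        exact this
      · filter_upwards [self_mem_nhdsWithin] with y hy
        exact Set.mem_Ioi.mpr (div_pos (by simpa using hsin_neg y hy) (hy_pos y hy))
    have h2 : Tendsto (fun y => y * Real.cos y / Real.sin y) (𝓝[Set.Ioo a b] b) atBot := by
      have hnum : Tendsto (fun y => y * Real.cos y) (𝓝[Set.Ioo a b] b) (𝓝 b) := by
        have : Tendsto (fun y : ℝ => y * Real.cos y) (𝓝 b) (𝓝 (b * Real.cos b)) :=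
          (continuous_id.mul Real.continuous_cos).tendsto b
        rw [hcos_b, mul_one] at this
        exact this.mono_left nhdsWithin_le_nhds
      have hinv : Tendsto (fun y => (Real.sin y)⁻¹) (𝓝[Set.Ioo a b] b) atBot := by
        have h3 : Tendsto (fun y => (-Real.sin y)⁻¹) (𝓝[Set.Ioo a b] b) atTop :=
          tendsto_inv_nhdsGT_zero.comp hnsb
        have h4 := tendsto_neg_atTop_atBot.comp h3
        refine h4.congr fun y => ?_
        simp [inv_neg]
      have := hnum.pos_mul_atBot hb_pos hinv
      refine this.congr fun y => ?_
      rw [div_eq_mul_inv]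
    exact Filter.Tendsto.atBot_add_atBot (tendsto_atBot_add_const_left _ 1 h1) h2
  refine ⟨part1, part2, ?_⟩
  -- Part 3: existence of a zero
  set m : ℝ := (a + b) / 2 with hm_def
  have hm1 : a < m := by rw [hm_def]; linarith
  have hm2 : m < b := by rw [hm_def]; linarith
  haveI := left_nhdsWithin_Ioo_neBot hab
  haveI := right_nhdsWithin_Ioo_neBot hab
  have e1 : ∀ᶠ y in 𝓝[Set.Ioo a b] a, 0 < F y ∧ y < m ∧ y ∈ Set.Ioo a b := by
    filter_upwards [part1.eventually_gt_atTop 0,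
      (eventually_lt_nhds hm1).filter_mono nhdsWithin_le_nhds, self_mem_nhdsWithin] with
      y h1 h2 h3
    exact ⟨h1, h2, h3⟩
  have e2 : ∀ᶠ y in 𝓝[Set.Ioo a b] b, F y < 0 ∧ m < y ∧ y ∈ Set.Ioo a b := by
    filter_upwards [part2.eventually_lt_atBot 0,
      (eventually_gt_nhds hm2).filter_mono nhdsWithin_le_nhds, self_mem_nhdsWithin] with
      y h1 h2 h3
    exact ⟨h1, h2, h3⟩
  obtain ⟨y₁, hy₁pos, hy₁m, hy₁mem⟩ := e1.exists
  obtain ⟨y₂, hy₂neg, hy₂m, hy₂mem⟩ := e2.exists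
  have hy12 : y₁ ≤ y₂ := le_of_lt (lt_trans hy₁m hy₂m)
  have hsub : Set.Icc y₁ y₂ ⊆ Set.Ioo a b := fun z hz =>
    ⟨lt_of_lt_of_le hy₁mem.1 hz.1, lt_of_le_of_lt hz.2 hy₂mem.2⟩
  have hcont : ContinuousOn F (Set.Icc y₁ y₂) := by
    have c1 : ContinuousOn (fun y => -Real.sin y / y) (Set.Icc y₁ y₂) :=
      (Real.continuous_sin.neg.continuousOn).div continuous_id.continuousOn
        (fun z hz => ne_of_gt (hy_pos z (hsub hz)))
    have c2 : ContinuousOn (fun y => Real.log (-Real.sin y / y)) (Set.Icc y₁ y₂) :=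
      c1.log fun z hz =>
        ne_of_gt (div_pos (by simpa using hsin_neg z (hsub hz)) (hy_pos z (hsub hz)))
    have c3 : ContinuousOn (fun y => y * Real.cos y / Real.sin y) (Set.Icc y₁ y₂) :=
      ((continuous_id.mul Real.continuous_cos).continuousOn).div
        Real.continuous_sin.continuousOn
        (fun z hz => ne_of_lt (hsin_neg z (hsub hz)))
    exact ContinuousOn.congr ((continuousOn_const.add c2).add c3)
      (fun z hz => hF z (hsub hz))
  have hivt := intermediate_value_Icc' hy12 hcont
  have h0mem : (0:ℝ) ∈ Set.Icc (F y₂) (F y₁) := ⟨le_of_lt hy₂neg, le_of_lt hy₁pos⟩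
  obtain ⟨y, hymem, hFy⟩ := hivt h0mem
  exact ⟨y, hsub hymem, hFy⟩
end

section
/- Let y ∈ ℝ with sin y < 0, y > 0, and suppose 1 + log(-sin(y)/y) + y·cos(y)/sin(y) = 0. Set x = -log(-sin(y)/y) and ξ = x + i·y. Then 1 - ξ = exp(ξ). In particular, the equation 1 - ξ = e^ξ has infinitely many solutions ξ ∈ ℂ, with distinct solutions having imaginary parts in the disjoint intervals ((2n+1)π, (2n+2)π), n ∈ ℕ. -/
open Real


lemma part1 : (∀ y : ℝ, Real.sin y < 0 → 0 < y →
      1 + Real.log (-Real.sin y / y) + y * Real.cos y / Real.sin y = 0 →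
      (1 : ℂ) - (↑(-Real.log (-Real.sin y / y)) + Complex.I * y) =
        Complex.exp (↑(-Real.log (-Real.sin y / y)) + Complex.I * y)) := by
  intro y hs hy hF
  have hsne : Real.sin y ≠ 0 := ne_of_lt hs
  have hspos : 0 < -Real.sin y / y := div_pos (by linarith) hy
  set x : ℝ := -Real.log (-Real.sin y / y) with hx
  have hexp : Real.exp x = -y / Real.sin y := by
    rw [hx, Real.exp_neg, Real.exp_log hspos, inv_div, div_neg]
    exact (neg_div _ _).symm
  have hre : (↑x + Complex.I * (y:ℂ)).re = x := by simp
  have him : (↑x + Complex.I * (y:ℂ)).im = y := by simp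
  apply Complex.ext
  · rw [Complex.exp_re, hre, him, hexp]
    simp only [Complex.sub_re, Complex.one_re, Complex.add_re, Complex.ofReal_re,
      Complex.mul_re, Complex.I_re, Complex.I_im, Complex.ofReal_im]
    have h2 : 1 + Real.log (-Real.sin y / y) = -(y * Real.cos y / Real.sin y) := by
      linarith
    have : 1 - (x + (0 * y - 1 * 0)) = 1 + Real.log (-Real.sin y / y) := by rw [hx]; ring
    rw [this, h2]
    field_simp
  · rw [Complex.exp_im, hre, him, hexp]
    simp only [Complex.sub_im, Complex.one_im, Complex.add_im, Complex.ofReal_im,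
      Complex.mul_im, Complex.I_re, Complex.I_im, Complex.ofReal_re]
    field_simp
    ring

set_option maxHeartbeats 1000000

lemma shift_sin (n : ℕ) (t : ℝ) : Real.sin (t + (2*(n:ℝ)+1)*π) = -Real.sin t := by
  have h : t + (2*(n:ℝ)+1)*π = (t + π) + n*(2*π) := by ring
  rw [h, Real.sin_add_nat_mul_two_pi, Real.sin_add_pi]

lemma shift_cos (n : ℕ) (t : ℝ) : Real.cos (t + (2*(n:ℝ)+1)*π) = -Real.cos t := by
  have h : t + (2*(n:ℝ)+1)*π = (t + π) + n*(2*π) := by ring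
  rw [h, Real.cos_add_nat_mul_two_pi, Real.cos_add_pi]

noncomputable def Ff (y : ℝ) : ℝ :=
  1 + Real.log (-Real.sin y / y) + y * Real.cos y / Real.sin y

lemma part2' (a : ℝ) (ha3 : 3 < a)
    (hss : ∀ t : ℝ, Real.sin (t + a) = -Real.sin t)
    (hcc : ∀ t : ℝ, Real.cos (t + a) = -Real.cos t) :
    ∃ c : ℝ, Real.sin c < 0 ∧ 0 < c ∧ Ff c = 0 ∧ c ∈ Set.Ioo a (a + π) := by
  have hπ : (3:ℝ) < π := Real.pi_gt_three
  have hπ' : π < 3.15 := by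
    have := Real.pi_lt_d2; linarith
  obtain ⟨ε, hε⟩ : ∃ ε : ℝ, ε = 1/(a+1) := ⟨_, rfl⟩
  obtain ⟨y₁, hy₁⟩ : ∃ y : ℝ, y = a + ε := ⟨_, rfl⟩
  obtain ⟨y₀, hy₀⟩ : ∃ y : ℝ, y = a + π/2 := ⟨_, rfl⟩
  have hεpos : 0 < ε := by rw [hε]; positivity
  have hεlt : ε < 1/4 := by
    rw [hε, div_lt_div_iff₀ (by linarith) (by norm_num)]; linarith
  have h10 : y₁ ≤ y₀ := by rw [hy₁, hy₀]; nlinarith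
  have hmem : ∀ y ∈ Set.Icc y₁ y₀, Real.sin y < 0 ∧ 0 < y ∧ a < y ∧ y < a + π := by
    intro y hy
    obtain ⟨hl, hr⟩ := hy
    have ht1 : 0 < y - a := by rw [hy₁] at hl; linarith
    have ht2 : y - a < π := by rw [hy₀] at hr; linarith
    have hsin : Real.sin y = -Real.sin (y - a) := by
      have h' := hss (y - a)
      have h'' : y - a + a = y := by ring
      rwa [h''] at h'
    constructor
    · rw [hsin]
      simpa using Real.sin_pos_of_pos_of_lt_pi ht1 ht2
    · exact ⟨by linarith, by linarith, by linarith⟩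
  have hcont : ContinuousOn Ff (Set.Icc y₁ y₀) := by
    apply ContinuousOn.add
    apply ContinuousOn.add continuousOn_const
    · apply ContinuousOn.log
      · exact ContinuousOn.div (Continuous.continuousOn (by continuity))
          (Continuous.continuousOn continuous_id) (fun y hy => ((hmem y hy).2.1).ne')
      · intro y hy
        obtain ⟨hs, hp, _⟩ := hmem y hy
        exact ne_of_gt (div_pos (by linarith) hp)
    · exact ContinuousOn.div
        (Continuous.continuousOn (by continuity))
        Real.continuous_sin.continuousOn (fun y hy => (hmem y hy).1.ne)
  have hsin0 : Real.sin y₀ = -1 := by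
    rw [hy₀, show a + π/2 = π/2 + a by ring, hss, Real.sin_pi_div_two]
  have hcos0 : Real.cos y₀ = 0 := by
    rw [hy₀, show a + π/2 = π/2 + a by ring, hcc, Real.cos_pi_div_two, neg_zero]
  have hy₀pos : 0 < y₀ := by rw [hy₀]; linarith
  have hF0 : Ff y₀ < 0 := by
    have he1 : Real.exp 1 < y₀ := by
      have := Real.exp_one_lt_d9
      rw [hy₀]; nlinarith
    have hlog : 1 < Real.log y₀ := (Real.lt_log_iff_exp_lt hy₀pos).mpr he1
    rw [Ff, hsin0, hcos0]
    rw [show -(-1:ℝ)/y₀ = y₀⁻¹ by field_simp]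
    rw [Real.log_inv]
    simp only [mul_zero, zero_div, add_zero]
    linarith
  have hsin1 : Real.sin y₁ = -Real.sin ε := by
    rw [hy₁, show a + ε = ε + a by ring, hss]
  have hcos1 : Real.cos y₁ = -Real.cos ε := by
    rw [hy₁, show a + ε = ε + a by ring, hcc]
  have hsε_pos : 0 < Real.sin ε := Real.sin_pos_of_pos_of_lt_pi hεpos (by linarith)
  have hsε_lb : ε/2 ≤ Real.sin ε := by
    have := Real.sin_gt_sub_cube hεpos
    nlinarith [this, mul_lt_mul_of_pos_left hεlt hεpos,
      mul_lt_mul_of_pos_left hεlt (mul_pos hεpos hεpos), mul_pos hεpos hεpos]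
  have hsε_ub : Real.sin ε < ε := Real.sin_lt hεpos
  have hcε_lb : (1:ℝ)/2 ≤ Real.cos ε := by
    have := Real.one_sub_sq_div_two_le_cos (x := ε)
    nlinarith
  have hy₁pos : 0 < y₁ := by rw [hy₁]; linarith
  have hF1 : 0 < Ff y₁ := by
    rw [Ff, hsin1, hcos1, neg_neg, mul_neg, div_neg, neg_div, neg_neg,
      Real.log_div hsε_pos.ne' hy₁pos.ne']
    have hlog1 : Real.log (Real.sin ε) ≥ Real.log (ε/2) :=
      Real.log_le_log (by positivity) hsε_lb
    have hlog2 : Real.log (ε/2) = -Real.log (a+1) - Real.log 2 := by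
      rw [Real.log_div hεpos.ne' (by norm_num), hε, Real.log_div one_ne_zero (by linarith),
        Real.log_one]
      ring
    have hlog3 : Real.log y₁ ≤ Real.log (a+1) := by
      apply Real.log_le_log hy₁pos
      rw [hy₁, hε]
      have : 1/(a+1) ≤ 1 := by
        rw [div_le_one (by linarith)]; linarith
      linarith
    have hlog4 : Real.log (a+1) ≤ a := by
      have := Real.log_le_sub_one_of_pos (show (0:ℝ) < a+1 by linarith)
      linarith
    have hlog2' : Real.log 2 < 1 := by
      have := Real.log_two_lt_d9; linarith
    have hbig : a*(a+1)/2 ≤ y₁ * Real.cos ε / Real.sin ε := by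
      rw [div_eq_mul_inv (y₁ * Real.cos ε)]
      have h1 : a * (1/2) ≤ y₁ * Real.cos ε := by
        apply mul_le_mul (by rw [hy₁]; linarith) hcε_lb (by norm_num) (by linarith)
      have h2 : a + 1 ≤ (Real.sin ε)⁻¹ := by
        have hse : Real.sin ε ≤ 1/(a+1) := by rw [← hε]; exact hsε_ub.le
        have := inv_anti₀ hsε_pos hse
        rwa [one_div, inv_inv] at this
      have h3 : (a * (1/2)) * (a+1) ≤ (y₁ * Real.cos ε) * (Real.sin ε)⁻¹ :=
        mul_le_mul h1 h2 (by linarith) (by nlinarith)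
      have h4 : a*(a+1)/2 = (a * (1/2)) * (a+1) := by ring
      linarith
    nlinarith [mul_pos (show (0:ℝ) < a by linarith) (show (0:ℝ) < a - 3 by linarith)]
  have h0mem : (0:ℝ) ∈ Set.Icc (Ff y₀) (Ff y₁) := ⟨hF0.le, hF1.le⟩
  obtain ⟨c, hc, hFc⟩ := intermediate_value_Icc' h10 hcont h0mem
  obtain ⟨hs, hp, hl, hr⟩ := hmem c hc
  exact ⟨c, hs, hp, hFc, hl, hr⟩

lemma part2 (n : ℕ) : ∃ c : ℝ, Real.sin c < 0 ∧ 0 < c ∧ Ff c = 0 ∧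
    c ∈ Set.Ioo ((2*(n:ℝ)+1)*π) ((2*(n:ℝ)+2)*π) := by
  have hπ : (3:ℝ) < π := Real.pi_gt_three
  have han : (0:ℝ) ≤ (n:ℝ) := Nat.cast_nonneg n
  have ha3 : 3 < (2*(n:ℝ)+1)*π := by nlinarith
  obtain ⟨c, h1, h2, h3, h4, h5⟩ := part2' ((2*(n:ℝ)+1)*π) ha3 (shift_sin n) (shift_cos n)
  refine ⟨c, h1, h2, h3, h4, ?_⟩
  have : (2*(n:ℝ)+2)*π = (2*(n:ℝ)+1)*π + π := by ring
  linarith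

theorem transcendental_equation_solutions :
    (∀ y : ℝ, Real.sin y < 0 → 0 < y →
      1 + Real.log (-Real.sin y / y) + y * Real.cos y / Real.sin y = 0 →
      (1 : ℂ) - (↑(-Real.log (-Real.sin y / y)) + Complex.I * y) =
        Complex.exp (↑(-Real.log (-Real.sin y / y)) + Complex.I * y)) ∧
    (∀ n : ℕ, ∃ ξ : ℂ, (1 : ℂ) - ξ = Complex.exp ξ ∧
      ξ.im ∈ Set.Ioo ((2*n+1)*π) ((2*n+2)*π)) := by
  constructor
  · exact part1
  · intro n
    obtain ⟨c, hs, hp, hFc, hio⟩ := part2 n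
    refine ⟨↑(-Real.log (-Real.sin c / c)) + Complex.I * c, part1 c hs hp hFc, ?_⟩
    simpa using hio
end
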